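/- arXiv:1305.1722 — 5 statements merged into one kernel-verified Lean document; each statement's English description precedes it below -/
import Mathlib

section
/- For every r > 1 and every (α, β) ∈ ℂ² with |α|² + |β|² = 1, one has c_0 + c_1 = 1, where c_0 = Σ_{j=0}^{∞} ((r²−1)/((r−1+j)(r+1+j)))·(2r²/((1+r)²(2r−1)²))·|α√(1−1/r) + β√(1+1/r)|² and c_1 = (r/(r+1))·|−α/r + β√(1−1/r²)|² + ((r−1)/r)·|α√(1−1/r²) + β/r|² + Σ_{j=2}^{∞} (1/(r(r+1)(r−1)²))·|α(r²+r−1)/(r−1) − β√(r²−1)|²·((r−1)/r)^{2j}. (The total mass of the origin localization and the bottom localization equals one.) -/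
open Filter Topology

set_option maxHeartbeats 1000000

/-- The total mass of the origin localization and the bottom localization equals one:
`c_0 + c_1 = 1`. -/
theorem mass_sums_to_one (r : ℝ) (hr : 1 < r) (α β : ℂ)
    (hnorm : norm α ^ 2 + norm β ^ 2 = 1) :
    (∑' j : ℕ, (r ^ 2 - 1) / ((r - 1 + j) * (r + 1 + j)) *
        (2 * r ^ 2 / ((1 + r) ^ 2 * (2 * r - 1) ^ 2) *
          norm (α * (Real.sqrt (1 - 1 / r) : ℂ)
            + β * (Real.sqrt (1 + 1 / r) : ℂ)) ^ 2)) +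
      (r / (r + 1) * norm (-α / r + β * (Real.sqrt (1 - 1 / r ^ 2) : ℂ)) ^ 2 +
        (r - 1) / r * norm (α * (Real.sqrt (1 - 1 / r ^ 2) : ℂ) + β / r) ^ 2 +
        ∑' j : ℕ, 1 / (r * (r + 1) * (r - 1) ^ 2) *
          norm (α * (((r ^ 2 + r - 1) / (r - 1) : ℝ) : ℂ)
            - β * (Real.sqrt (r ^ 2 - 1) : ℂ)) ^ 2 *
          ((r - 1) / r) ^ (2 * (j + 2))) = 1 := by
  have hr0 : (0:ℝ) < r := by linarith
  have hr1 : (0:ℝ) < r - 1 := by linarith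
  have hr2 : (0:ℝ) < 2 * r - 1 := by linarith
  have hrp : (0:ℝ) < r + 1 := by linarith
  have hrne : r ≠ 0 := ne_of_gt hr0
  -- general expansion lemma
  have key : ∀ (x y : ℝ), norm (α * (x:ℂ) + β * (y:ℂ)) ^ 2 =
      norm α ^ 2 * x ^ 2 + norm β ^ 2 * y ^ 2
        + 2 * x * y * (α.re * β.re + α.im * β.im) := by
    intro x y
    rw [Complex.sq_norm, Complex.sq_norm, Complex.sq_norm]
    simp only [Complex.normSq_apply, Complex.add_re, Complex.add_im, Complex.mul_re,
      Complex.mul_im, Complex.ofReal_re, Complex.ofReal_im]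
    ring
  set t := Real.sqrt (r ^ 2 - 1) with htdef
  have ht2 : t ^ 2 = r ^ 2 - 1 := Real.sq_sqrt (by nlinarith)
  have hw : Real.sqrt (1 - 1 / r ^ 2) = t / r := by
    rw [show 1 - 1 / r ^ 2 = (r ^ 2 - 1) / r ^ 2 by field_simp,
      Real.sqrt_div (by nlinarith), Real.sqrt_sq hr0.le, htdef]
  have h1r : (1:ℝ) / r ≤ 1 := by rw [div_le_one hr0]; linarith
  have hu2 : Real.sqrt (1 - 1 / r) ^ 2 = 1 - 1 / r := Real.sq_sqrt (by linarith)
  have hv2 : Real.sqrt (1 + 1 / r) ^ 2 = 1 + 1 / r := Real.sq_sqrt (by positivity)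
  have huv : Real.sqrt (1 - 1 / r) * Real.sqrt (1 + 1 / r) = t / r := by
    rw [← Real.sqrt_mul (by linarith), show (1 - 1/r) * (1 + 1/r) = 1 - 1/r^2 by ring, hw]
  set s := α.re * β.re + α.im * β.im with hsdef
  set a := norm α ^ 2 with hadef
  set b := norm β ^ 2 with hbdef
  have hA : norm (α * (Real.sqrt (1 - 1 / r) : ℂ)
      + β * (Real.sqrt (1 + 1 / r) : ℂ)) ^ 2
      = a * (1 - 1/r) + b * (1 + 1/r) + 2 * (t/r) * s := by
    rw [key, hu2, hv2]
    linear_combination (2 * s) * huv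
  have hB : norm (-α / r + β * (Real.sqrt (1 - 1 / r ^ 2) : ℂ)) ^ 2
      = a * (1/r^2) + b * (1 - 1/r^2) - 2 * (t/r^2) * s := by
    have eB : -α / (r:ℂ) + β * (Real.sqrt (1 - 1 / r ^ 2) : ℂ)
        = α * ((-(1/r) : ℝ):ℂ) + β * ((t/r : ℝ):ℂ) := by
      rw [hw]; push_cast; ring
    rw [eB, key]
    have h2 : (t/r)^2 = 1 - 1/r^2 := by
      rw [div_pow, ht2]; field_simp
    linear_combination b * h2
  have hC : norm (α * (Real.sqrt (1 - 1 / r ^ 2) : ℂ) + β / r) ^ 2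
      = a * (1 - 1/r^2) + b * (1/r^2) + 2 * (t/r^2) * s := by
    have eC : α * (Real.sqrt (1 - 1 / r ^ 2) : ℂ) + β / (r:ℂ)
        = α * ((t/r : ℝ):ℂ) + β * (((1/r) : ℝ):ℂ) := by
      rw [hw]; push_cast; ring
    rw [eC, key]
    have h2 : (t/r)^2 = 1 - 1/r^2 := by
      rw [div_pow, ht2]; field_simp
    linear_combination a * h2
  have hD : norm (α * (((r ^ 2 + r - 1) / (r - 1) : ℝ) : ℂ)
      - β * (Real.sqrt (r ^ 2 - 1) : ℂ)) ^ 2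
      = a * ((r^2 + r - 1)/(r-1))^2 + b * (r^2 - 1)
        - 2 * ((r^2 + r - 1)/(r-1)) * t * s := by
    have eD : α * (((r ^ 2 + r - 1) / (r - 1) : ℝ) : ℂ)
        - β * (Real.sqrt (r ^ 2 - 1) : ℂ)
        = α * (((r ^ 2 + r - 1) / (r - 1) : ℝ) : ℂ) + β * ((-t : ℝ):ℂ) := by
      rw [← htdef]; push_cast; ring
    rw [eD, key]
    have : t^2 - (r^2 - 1) = 0 := by rw [ht2]; ring
    linear_combination b * this
  -- first tsum: telescoping
  set g : ℕ → ℝ := fun j => (r^2 - 1)/2 * (1/(r - 1 + j) + 1/(r + j)) with hgdef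
  have hfg : ∀ j : ℕ, (r ^ 2 - 1) / ((r - 1 + j) * (r + 1 + j)) = g j - g (j+1) := by
    intro j
    have hj : (0:ℝ) ≤ j := Nat.cast_nonneg j
    have d1 : r - 1 + (j:ℝ) ≠ 0 := by positivity
    have d2 : r + (j:ℝ) ≠ 0 := by positivity
    have d3 : r + 1 + (j:ℝ) ≠ 0 := by positivity
    simp only [hgdef]
    push_cast
    have d4 : r - 1 + ((j:ℝ) + 1) ≠ 0 := by positivity
    have d5 : r + ((j:ℝ) + 1) ≠ 0 := by positivity
    field_simp
    ring
  have hg0 : Tendsto g atTop (𝓝 0) := by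
    have h1 : Tendsto (fun n : ℕ => 1/(r - 1 + (n:ℝ))) atTop (𝓝 0) := by
      simp only [one_div]
      exact (tendsto_atTop_add_const_left atTop (r-1) tendsto_natCast_atTop_atTop).inv_tendsto_atTop
    have h2 : Tendsto (fun n : ℕ => 1/(r + (n:ℝ))) atTop (𝓝 0) := by
      simp only [one_div]
      exact (tendsto_atTop_add_const_left atTop r tendsto_natCast_atTop_atTop).inv_tendsto_atTop
    have := (h1.add h2).const_mul ((r^2 - 1)/2)
    simpa [hgdef] using this
  have hsum : HasSum (fun j : ℕ => (r ^ 2 - 1) / ((r - 1 + j) * (r + 1 + j)))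
      ((r+1) * (2*r - 1) / (2*r)) := by
    have hnn : ∀ j : ℕ, 0 ≤ (r ^ 2 - 1) / ((r - 1 + j) * (r + 1 + j)) := by
      intro j
      have hj : (0:ℝ) ≤ j := Nat.cast_nonneg j
      have : (0:ℝ) < (r - 1 + j) * (r + 1 + j) := by positivity
      have h2 : (0:ℝ) ≤ r^2 - 1 := by nlinarith
      positivity
    rw [hasSum_iff_tendsto_nat_of_nonneg hnn]
    have hps : ∀ n, ∑ i ∈ Finset.range n, (r ^ 2 - 1) / ((r - 1 + i) * (r + 1 + i))
        = g 0 - g n := by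
      intro n
      rw [Finset.sum_congr rfl (fun i _ => hfg i), Finset.sum_range_sub' g]
    simp only [hps]
    have h0 : g 0 = (r+1) * (2*r - 1) / (2*r) := by
      simp only [hgdef, Nat.cast_zero, add_zero]
      field_simp
      ring
    rw [← h0]
    simpa using tendsto_const_nhds.sub hg0
  have hS1 : ∑' j : ℕ, (r ^ 2 - 1) / ((r - 1 + j) * (r + 1 + j))
      = (r+1) * (2*r - 1) / (2*r) := hsum.tsum_eq
  -- second tsum: geometric
  have hq0 : (0:ℝ) ≤ (r-1)/r := div_nonneg hr1.le hr0.le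
  have hq1 : (r-1)/r < 1 := (div_lt_one hr0).mpr (by linarith)
  have hq2 : ((r-1)/r)^2 < 1 := by nlinarith
  have hq20 : (0:ℝ) ≤ ((r-1)/r)^2 := by positivity
  have hgeo : ∑' j : ℕ, (((r-1)/r)^2)^j = (1 - ((r-1)/r)^2)⁻¹ :=
    tsum_geometric_of_lt_one hq20 hq2
  set D := norm (α * (((r ^ 2 + r - 1) / (r - 1) : ℝ) : ℂ)
      - β * (Real.sqrt (r ^ 2 - 1) : ℂ)) ^ 2 with hDdef
  have hT2 : ∑' j : ℕ, 1 / (r * (r + 1) * (r - 1) ^ 2) * D * ((r - 1) / r) ^ (2 * (j + 2))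
      = 1 / (r * (r + 1) * (r - 1) ^ 2) * D * ((r-1)^4 / (r^2 * (2*r - 1))) := by
    calc ∑' j : ℕ, 1 / (r * (r + 1) * (r - 1) ^ 2) * D * ((r - 1) / r) ^ (2 * (j + 2))
        = ∑' j : ℕ, (1 / (r * (r + 1) * (r - 1) ^ 2) * D * (((r-1)/r)^2)^2)
            * (((r-1)/r)^2)^j := by
          refine tsum_congr fun j => ?_
          rw [pow_mul, pow_add]
          ring
      _ = (1 / (r * (r + 1) * (r - 1) ^ 2) * D * (((r-1)/r)^2)^2)
            * ∑' j : ℕ, (((r-1)/r)^2)^j := tsum_mul_left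
      _ = _ := by
          rw [hgeo, show 1 - ((r-1)/r)^2 = (2*r-1)/r^2 by field_simp; ring]
          field_simp
  rw [tsum_mul_right, hS1, hT2, hA, hB, hC, hD]
  have hb1 : b = 1 - a := by rw [hadef, hbdef] at hnorm ⊢; linarith
  rw [hb1]
  have h1r' : (1:ℝ) + r ≠ 0 := by linarith
  have h2r : 2*r - 1 ≠ 0 := ne_of_gt hr2
  have hrm1 : r - 1 ≠ 0 := ne_of_gt hr1
  field_simp
  ring_nf
  have h2r'' : -1 + r*2 ≠ 0 := by linarith
  field_simp
  ring
end

section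
/- Large-deviation type convergence: assume the initial coin state φ_0 = (α, β) satisfies √(r−1)·α + √(r+1)·β = 0 (i.e., φ_0 is orthogonal to l = (√(r−1), √(r+1))). Then for every ε ∈ (0,1), lim_{n→∞} (1/n)·log( Σ_{j ∈ ℕ, j < n(1−ε)} μ_n(j) ) = 2ε·log((r−1)/r); equivalently, (1/n)·log P(1 − X_n/n > ε) converges to ε·log(((1−r)/r)²). -/
open Filter Topology Matrix

/-- Coin parameter `γ_j = 1/(r+j)`. -/
noncomputable def gam (r : ℝ) (j : ℕ) : ℝ := 1 / (r + j)

/-- `ρ_j = √(1 - γ_j²)`. -/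
noncomputable def rho (r : ℝ) (j : ℕ) : ℝ := Real.sqrt (1 - gam r j ^ 2)

noncomputable def qq (r : ℝ) : ℝ := (r - 1) / r
noncomputable def cc (r : ℝ) (j : ℕ) : ℝ := Real.sqrt ((r + j) / (2 * (r + j - 1)))
noncomputable def Lv (r : ℝ) (j : ℕ) : ℝ := -Real.sqrt (1 / (2 * (r + j) * (r + j + 1)))
noncomputable def Rv (r : ℝ) (j : ℕ) : ℝ := ((2 * r - 1) / r ^ 2 - 1 / (r + j)) * cc r j

section algebra
variable {r : ℝ}

lemma hj0 (hr : 1 < r) (j : ℕ) : (0:ℝ) < r + j - 1 := by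
  have := Nat.cast_nonneg (α := ℝ) j; linarith

lemma hj1 (hr : 1 < r) (j : ℕ) : (0:ℝ) < r + j := by
  have := Nat.cast_nonneg (α := ℝ) j; linarith

lemma gam_pos (hr : 1 < r) (j : ℕ) : 0 < gam r j := by
  have := hj1 hr j; unfold gam; positivity

lemma radic_nonneg (hr : 1 < r) (j : ℕ) : 0 ≤ 1 - gam r j ^ 2 := by
  have h1 := hj1 hr j
  have h0 := hj0 hr j
  have : gam r j ≤ 1 := by
    unfold gam
    rw [div_le_one h1]; linarith
  have h2 := (gam_pos hr j).le
  nlinarith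

lemma rho_sq (hr : 1 < r) (j : ℕ) : rho r j ^ 2 = 1 - gam r j ^ 2 :=
  Real.sq_sqrt (radic_nonneg hr j)

lemma rho_nonneg (r : ℝ) (j : ℕ) : 0 ≤ rho r j := Real.sqrt_nonneg _

lemma cc_pos (hr : 1 < r) (j : ℕ) : 0 < cc r j := by
  have h1 := hj1 hr j
  have h0 := hj0 hr j
  unfold cc; positivity

lemma idA (hr : 1 < r) (j : ℕ) : rho r j * cc r j = cc r (j + 1) := by
  have h1 := hj1 hr j
  have h0 := hj0 hr j
  have hnn := radic_nonneg hr j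
  unfold gam at hnn
  unfold rho cc gam
  rw [← Real.sqrt_mul hnn]
  congr 1
  have e1 : r + (j:ℝ) ≠ 0 := ne_of_gt h1
  have e0 : r + (j:ℝ) - 1 ≠ 0 := ne_of_gt h0
  have e2 : r + (j:ℝ) + 1 ≠ 0 := by positivity
  have e3 : (2:ℝ) * (r + (j:ℝ)) ≠ 0 := mul_ne_zero two_ne_zero e1
  have e4 : (2:ℝ) * (r + (j:ℝ) - 1) ≠ 0 := by
    have := hj0 hr j; positivity
  have e5 : (2:ℝ) * (r + (j:ℝ) + 1) ≠ 0 := by positivity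
  push_cast
  rw [show r + ((j:ℝ) + 1) - 1 = r + (j:ℝ) from by ring]
  field_simp
  ring

lemma idB (hr : 1 < r) (j : ℕ) : gam r (j + 1) * cc r (j + 1) = -Lv r j := by
  have h1 := hj1 hr j
  have h1' := hj1 hr (j + 1)
  have h0' := hj0 hr (j + 1)
  unfold Lv cc gam
  rw [neg_neg, show (1:ℝ) / (r + ↑(j+1)) = Real.sqrt ((1 / (r + ↑(j+1)))^2) from
    (Real.sqrt_sq (by positivity)).symm]
  rw [← Real.sqrt_mul (by positivity)]
  congr 1
  have e1 : r + (j:ℝ) ≠ 0 := ne_of_gt h1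
  have e2 : r + (j:ℝ) + 1 ≠ 0 := by positivity
  have e3 : (2:ℝ) * (r + (j:ℝ)) ≠ 0 := mul_ne_zero two_ne_zero e1
  have e4 : (2:ℝ) * (r + (j:ℝ) - 1) ≠ 0 := by
    have := hj0 hr j; positivity
  have e5 : (2:ℝ) * (r + (j:ℝ) + 1) ≠ 0 := by positivity
  push_cast
  rw [show r + ((j:ℝ) + 1) - 1 = r + (j:ℝ) from by ring]
  field_simp
  ring
end algebra

section algebra2
variable {r : ℝ}

lemma idC (hr : 1 < r) (j : ℕ) :
    Rv r (j + 1) = -(gam r j * Lv r j) + rho r j * Rv r j := by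
  have h1 := hj1 hr j
  have hrpos : (0:ℝ) < r := by linarith
  have e1 : r + (j:ℝ) ≠ 0 := ne_of_gt h1
  have e2 : r + (j:ℝ) + 1 ≠ 0 := by positivity
  have e2' : r + ((j:ℝ) + 1) ≠ 0 := by positivity
  have er : r ≠ 0 := ne_of_gt hrpos
  have hL : Lv r j = -(gam r (j+1) * cc r (j+1)) := by rw [idB hr j]; ring
  have hA := idA hr j
  unfold Rv
  rw [hL]
  unfold gam
  push_cast
  linear_combination (norm := (field_simp; ring))
    (-((2 * r - 1) / r ^ 2 - 1 / (r + (j:ℝ)))) * hA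

lemma idD (hr : 1 < r) (j : ℕ) :
    qq r ^ 2 * Lv r j = rho r (j + 1) * Lv r (j + 1) + gam r (j + 1) * Rv r (j + 1) := by
  have h1 := hj1 hr j
  have hrpos : (0:ℝ) < r := by linarith
  have e1 : r + (j:ℝ) ≠ 0 := ne_of_gt h1
  have e2 : r + (j:ℝ) + 1 ≠ 0 := by positivity
  have e2' : r + ((j:ℝ) + 1) ≠ 0 := by positivity
  have e3 : r + (j:ℝ) + 2 ≠ 0 := by positivity
  have e3' : r + ((j:ℝ) + 2) ≠ 0 := by positivity
  have er : r ≠ 0 := ne_of_gt hrpos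
  have hL : Lv r j = -(gam r (j+1) * cc r (j+1)) := by rw [idB hr j]; ring
  have hL' : Lv r (j+1) = -(gam r (j+2) * cc r (j+2)) := by rw [idB hr (j+1)]; ring
  have hA : cc r (j+2) = rho r (j+1) * cc r (j+1) := (idA hr (j+1)).symm
  have hsq := rho_sq hr (j+1)
  unfold gam at hsq
  push_cast at hsq
  rw [hL, hL', hA]
  unfold Rv qq gam
  push_cast
  linear_combination (norm := (field_simp; ring))
    (cc r (j+1) * (1/(r+(j:ℝ)+2))) * hsq

lemma idE (hr : 1 < r) :
    -(qq r) * Rv r 0 = rho r 0 * Lv r 0 + gam r 0 * Rv r 0 := by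
  have hrpos : (0:ℝ) < r := by linarith
  have er : r ≠ 0 := ne_of_gt hrpos
  have e2 : r + (1:ℝ) ≠ 0 := by positivity
  have hL : Lv r 0 = -(gam r 1 * cc r 1) := by rw [idB hr 0]; ring
  have hA : cc r 1 = rho r 0 * cc r 0 := (idA hr 0).symm
  have hsq := rho_sq hr 0
  unfold gam at hsq
  push_cast at hsq
  rw [hL, hA]
  unfold Rv qq gam
  push_cast
  linear_combination (norm := (field_simp; ring)) (cc r 0 * (1/(r+1))) * hsq

lemma idF1 (hr : 1 < r) :
    cc r 1 = gam r 0 * cc r 1 + rho r 0 * (qq r * cc r 0) := by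
  have hrpos : (0:ℝ) < r := by linarith
  have er : r ≠ 0 := ne_of_gt hrpos
  have hA : rho r 0 * cc r 0 = cc r 1 := idA hr 0
  unfold qq gam
  push_cast
  linear_combination (norm := (field_simp; ring)) (-((r-1)/r)) * hA

lemma idF2 (hr : 1 < r) :
    qq r * cc r 0 = rho r 0 * cc r 1 + gam r 0 * (-(qq r * cc r 0)) := by
  have hrpos : (0:ℝ) < r := by linarith
  have er : r ≠ 0 := ne_of_gt hrpos
  have hA : cc r 1 = rho r 0 * cc r 0 := (idA hr 0).symm
  have hsq := rho_sq hr 0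
  unfold gam at hsq
  push_cast at hsq
  rw [hA]
  unfold qq gam
  push_cast
  linear_combination (norm := (field_simp; ring)) (-(cc r 0)) * hsq

lemma idF3 (hr : 1 < r) :
    Rv r 0 = gam r 0 * (qq r * cc r 0) := by
  have hrpos : (0:ℝ) < r := by linarith
  have er : r ≠ 0 := ne_of_gt hrpos
  unfold Rv qq gam
  push_cast
  field_simp
  ring
end algebra2

noncomputable def psi1 (r : ℝ) (n j : ℕ) : ℝ :=
  if n = 0 ∧ j = 0 then cc r 1
  else if j + 2 ≤ n then (-qq r) ^ (n - j - 2) * Lv r j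
  else 0

noncomputable def psi2 (r : ℝ) (n j : ℕ) : ℝ :=
  if n = 0 ∧ j = 0 then -(qq r * cc r 0)
  else if n < j then 0
  else if n = j then -cc r n
  else if n = j + 1 then qq r * cc r j
  else (-qq r) ^ (n - j - 2) * Rv r j

section psifacts
variable (r : ℝ)

lemma psi1_zero {n j : ℕ} (h0 : ¬(n = 0 ∧ j = 0)) (h : ¬ j + 2 ≤ n) : psi1 r n j = 0 := by
  unfold psi1; rw [if_neg h0, if_neg h]

lemma psi1_v {n j : ℕ} (h : j + 2 ≤ n) : psi1 r n j = (-qq r) ^ (n - j - 2) * Lv r j := by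
  unfold psi1; rw [if_neg (by omega), if_pos h]

lemma psi2_zero {n j : ℕ} (h : n < j) : psi2 r n j = 0 := by
  unfold psi2; rw [if_neg (by omega), if_pos h]

lemma psi2_diag {n j : ℕ} (h : n = j) (h1 : 1 ≤ n) : psi2 r n j = -cc r n := by
  unfold psi2; rw [if_neg (by omega), if_neg (by omega), if_pos h]

lemma psi2_s {n j : ℕ} (h : n = j + 1) : psi2 r n j = qq r * cc r j := by
  unfold psi2; rw [if_neg (by omega), if_neg (by omega), if_neg (by omega), if_pos h]

lemma psi2_v {n j : ℕ} (h : j + 2 ≤ n) : psi2 r n j = (-qq r) ^ (n - j - 2) * Rv r j := by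
  unfold psi2
  rw [if_neg (by omega), if_neg (by omega), if_neg (by omega), if_neg (by omega)]

lemma psi1_00 : psi1 r 0 0 = cc r 1 := by unfold psi1; rw [if_pos ⟨rfl, rfl⟩]
lemma psi2_00 : psi2 r 0 0 = -(qq r * cc r 0) := by unfold psi2; rw [if_pos ⟨rfl, rfl⟩]
end psifacts

/-- `P_j = [[ρ_j, γ_j], [0, 0]]`. -/
noncomputable def Pmat (r : ℝ) (j : ℕ) : Matrix (Fin 2) (Fin 2) ℂ :=
  !![(rho r j : ℂ), (gam r j : ℂ); 0, 0]

/-- `Q_j = [[0, 0], [−γ_j, ρ_j]]`. -/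
noncomputable def Qmat (r : ℝ) (j : ℕ) : Matrix (Fin 2) (Fin 2) ℂ :=
  !![0, 0; (-(gam r j) : ℂ), (rho r j : ℂ)]

/-- `S_0 = [[0, 0], [ρ_0, γ_0]]`. -/
noncomputable def Smat (r : ℝ) : Matrix (Fin 2) (Fin 2) ℂ :=
  !![0, 0; (rho r 0 : ℂ), (gam r 0 : ℂ)]

section mv
variable (r : ℝ) (k : ℕ) (x y : ℝ)

lemma Pmul : Pmat r k *ᵥ ![(x:ℂ), (y:ℂ)] = ![((rho r k * x + gam r k * y : ℝ) : ℂ), ((0:ℝ):ℂ)] := by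
  funext i
  fin_cases i <;>
    simp [Pmat, Matrix.mulVec, dotProduct, Fin.sum_univ_two] <;> push_cast <;> ring

lemma Qmul : Qmat r k *ᵥ ![(x:ℂ), (y:ℂ)] = ![((0:ℝ):ℂ), ((-(gam r k * x) + rho r k * y : ℝ) : ℂ)] := by
  funext i
  fin_cases i <;>
    simp [Qmat, Matrix.mulVec, dotProduct, Fin.sum_univ_two] <;> push_cast <;> ring

lemma Smul : Smat r *ᵥ ![(x:ℂ), (y:ℂ)] = ![((0:ℝ):ℂ), ((rho r 0 * x + gam r 0 * y : ℝ) : ℂ)] := by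
  funext i
  fin_cases i <;>
    simp [Smat, Matrix.mulVec, dotProduct, Fin.sum_univ_two] <;> push_cast <;> ring
end mv

section steps
variable {r : ℝ}

lemma step0a (hr : 1 < r) (n : ℕ) :
    rho r 1 * psi1 r n 1 + gam r 1 * psi2 r n 1 = psi1 r (n + 1) 0 := by
  have hB : gam r 1 * cc r 1 = -Lv r 0 := idB hr 0
  obtain h | h | h | ⟨m, rfl⟩ : n = 0 ∨ n = 1 ∨ n = 2 ∨ ∃ m, n = m + 3 := by
    rcases n with _ | _ | _ | m
    · exact Or.inl rfl
    · exact Or.inr (Or.inl rfl)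
    · exact Or.inr (Or.inr (Or.inl rfl))
    · exact Or.inr (Or.inr (Or.inr ⟨m, rfl⟩))
  · subst h
    rw [psi1_zero r (by omega) (by omega), psi2_zero r (by omega),
      psi1_zero r (by omega) (by omega)]
    ring
  · subst h
    rw [psi1_zero r (by omega) (by omega), psi2_diag r rfl (by omega),
      psi1_v r (by omega : 0 + 2 ≤ 2)]
    norm_num
    linear_combination -hB
  · subst h
    rw [psi1_zero r (by omega) (by omega), psi2_s r rfl,
      psi1_v r (by omega : 0 + 2 ≤ 3)]
    norm_num
    linear_combination (qq r) * hB
  · have hD : qq r ^ 2 * Lv r 0 = rho r 1 * Lv r 1 + gam r 1 * Rv r 1 := idD hr 0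
    rw [psi1_v r (by omega : 1 + 2 ≤ m + 3), psi2_v r (by omega : 1 + 2 ≤ m + 3),
      psi1_v r (by omega : 0 + 2 ≤ m + 3 + 1)]
    have e1 : m + 3 - 1 - 2 = m := by omega
    have e2 : m + 3 + 1 - 0 - 2 = m + 2 := by omega
    rw [e1, e2, pow_add]
    linear_combination (-((-qq r) ^ m)) * hD

lemma step0b (hr : 1 < r) (n : ℕ) :
    rho r 0 * psi1 r n 0 + gam r 0 * psi2 r n 0 = psi2 r (n + 1) 0 := by
  obtain h | h | ⟨m, rfl⟩ : n = 0 ∨ n = 1 ∨ ∃ m, n = m + 2 := by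
    rcases n with _ | _ | m
    · exact Or.inl rfl
    · exact Or.inr (Or.inl rfl)
    · exact Or.inr (Or.inr ⟨m, rfl⟩)
  · subst h
    rw [psi1_00, psi2_00, psi2_s r rfl]
    linear_combination -(idF2 hr)
  · subst h
    rw [psi1_zero r (by omega) (by omega), psi2_s r rfl,
      psi2_v r (by omega : 0 + 2 ≤ 2)]
    norm_num
    linear_combination -(idF3 hr)
  · rw [psi1_v r (by omega : 0 + 2 ≤ m + 2), psi2_v r (by omega : 0 + 2 ≤ m + 2),
      psi2_v r (by omega : 0 + 2 ≤ m + 3)]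
    have e1 : m + 2 - 0 - 2 = m := by omega
    have e2 : m + 2 + 1 - 0 - 2 = m + 1 := by omega
    rw [e1, e2, pow_add]
    linear_combination (-((-qq r) ^ m)) * (idE hr)

lemma stepa (hr : 1 < r) (n j : ℕ) :
    rho r (j + 2) * psi1 r n (j + 2) + gam r (j + 2) * psi2 r n (j + 2)
      = psi1 r (n + 1) (j + 1) := by
  have hB : gam r (j + 2) * cc r (j + 2) = -Lv r (j + 1) := idB hr (j + 1)
  obtain h | h | h | h : n < j + 2 ∨ n = j + 2 ∨ n = j + 3 ∨ j + 4 ≤ n := by omega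
  · rw [psi1_zero r (by omega) (by omega), psi2_zero r (by omega),
      psi1_zero r (by omega) (by omega)]
    ring
  · subst h
    rw [psi1_zero r (by omega) (by omega), psi2_diag r rfl (by omega),
      psi1_v r (by omega : j + 1 + 2 ≤ j + 2 + 1)]
    have e1 : j + 2 + 1 - (j + 1) - 2 = 0 := by omega
    rw [e1, pow_zero]
    linear_combination -hB
  · subst h
    rw [psi1_zero r (by omega) (by omega), psi2_s r rfl,
      psi1_v r (by omega : j + 1 + 2 ≤ j + 3 + 1)]
    have e1 : j + 3 + 1 - (j + 1) - 2 = 1 := by omega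
    rw [e1, pow_one]
    linear_combination (qq r) * hB
  · have hD : qq r ^ 2 * Lv r (j + 1) = rho r (j + 2) * Lv r (j + 2) + gam r (j + 2) * Rv r (j + 2) :=
      idD hr (j + 1)
    rw [psi1_v r (by omega : j + 2 + 2 ≤ n), psi2_v r (by omega : j + 2 + 2 ≤ n),
      psi1_v r (by omega : j + 1 + 2 ≤ n + 1)]
    have e1 : n - (j + 2) - 2 = n - j - 4 := by omega
    have e2 : n + 1 - (j + 1) - 2 = (n - j - 4) + 2 := by omega
    rw [e1, e2, pow_add]
    linear_combination (-((-qq r) ^ (n - j - 4))) * hD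

lemma stepb (hr : 1 < r) (n j : ℕ) :
    -(gam r j * psi1 r n j) + rho r j * psi2 r n j = psi2 r (n + 1) (j + 1) := by
  obtain h | h | h | h | h | h :
      n < j ∨ (n = 0 ∧ j = 0) ∨ (n = j ∧ 1 ≤ n) ∨ n = j + 1 ∨ n = j + 2 ∨ j + 3 ≤ n := by omega
  · rw [psi1_zero r (by omega) (by omega), psi2_zero r (by omega),
      psi2_zero r (by omega)]
    ring
  · obtain ⟨h1, h2⟩ := h; subst h1; subst h2
    rw [psi1_00, psi2_00, psi2_diag r rfl (by omega)]
    show -(gam r 0 * cc r 1) + rho r 0 * -(qq r * cc r 0) = -cc r 1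
    linear_combination (idF1 hr)
  · obtain ⟨h1, h2⟩ := h; subst h1
    rw [psi1_zero r (by omega) (by omega), psi2_diag r rfl h2,
      psi2_diag r rfl (by omega)]
    have hA : rho r n * cc r n = cc r (n + 1) := idA hr n
    linear_combination -hA
  · subst h
    rw [psi1_zero r (by omega) (by omega), psi2_s r rfl, psi2_s r rfl]
    have hA : rho r j * cc r j = cc r (j + 1) := idA hr j
    linear_combination (qq r) * hA
  · subst h
    rw [psi1_v r (by omega : j + 2 ≤ j + 2), psi2_v r (by omega : j + 2 ≤ j + 2),
      psi2_v r (by omega : j + 1 + 2 ≤ j + 2 + 1)]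
    have e1 : j + 2 - j - 2 = 0 := by omega
    have e2 : j + 2 + 1 - (j + 1) - 2 = 0 := by omega
    rw [e1, e2, pow_zero]
    linear_combination -(idC hr j)
  · rw [psi1_v r (by omega : j + 2 ≤ n), psi2_v r (by omega : j + 2 ≤ n),
      psi2_v r (by omega : j + 1 + 2 ≤ n + 1)]
    have e2 : n + 1 - (j + 1) - 2 = n - j - 2 := by omega
    rw [e2]
    linear_combination (-((-qq r) ^ (n - j - 2))) * (idC hr j)
end steps

/-- Weight matrices `Ξ_n(j)` of the first-kind half-line quantum walk with
coin parameters `γ_j = 1/(r+j)`. -/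
noncomputable def Xi (r : ℝ) : ℕ → ℕ → Matrix (Fin 2) (Fin 2) ℂ
  | 0, 0 => 1
  | 0, _ + 1 => 0
  | n + 1, 0 => Pmat r 1 * Xi r n 1 + Smat r * Xi r n 0
  | n + 1, j + 1 => Pmat r (j + 2) * Xi r n (j + 2) + Qmat r j * Xi r n j

lemma main_formula {r : ℝ} (hr : 1 < r) :
    ∀ n j, Xi r n j *ᵥ ![((cc r 1 : ℝ) : ℂ), ((-(qq r * cc r 0) : ℝ) : ℂ)]
      = ![((psi1 r n j : ℝ) : ℂ), ((psi2 r n j : ℝ) : ℂ)] := by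
  intro n
  induction n with
  | zero =>
    intro j
    match j with
    | 0 =>
      show (1 : Matrix (Fin 2) (Fin 2) ℂ) *ᵥ _ = _
      rw [Matrix.one_mulVec, psi1_00, psi2_00]
    | j + 1 =>
      show (0 : Matrix (Fin 2) (Fin 2) ℂ) *ᵥ _ = _
      rw [Matrix.zero_mulVec, psi1_zero r (by omega) (by omega), psi2_zero r (by omega)]
      norm_num
      funext i
      fin_cases i <;> simp
  | succ n ih =>
    intro j
    match j with
    | 0 =>
      show (Pmat r 1 * Xi r n 1 + Smat r * Xi r n 0) *ᵥ _ = _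
      rw [Matrix.add_mulVec, ← Matrix.mulVec_mulVec, ← Matrix.mulVec_mulVec, ih 1, ih 0,
        Pmul, Smul]
      funext i
      fin_cases i
      · show ((rho r 1 * psi1 r n 1 + gam r 1 * psi2 r n 1 : ℝ) : ℂ) + ((0:ℝ):ℂ)
          = ((psi1 r (n+1) 0 : ℝ) : ℂ)
        rw [step0a hr n]
        push_cast
        ring
      · show ((0:ℝ):ℂ) + ((rho r 0 * psi1 r n 0 + gam r 0 * psi2 r n 0 : ℝ) : ℂ)
          = ((psi2 r (n+1) 0 : ℝ) : ℂ)
        rw [step0b hr n]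
        push_cast
        ring
    | j + 1 =>
      show (Pmat r (j + 2) * Xi r n (j + 2) + Qmat r j * Xi r n j) *ᵥ _ = _
      rw [Matrix.add_mulVec, ← Matrix.mulVec_mulVec, ← Matrix.mulVec_mulVec,
        ih (j + 2), ih j, Pmul, Qmul]
      funext i
      fin_cases i
      · show ((rho r (j+2) * psi1 r n (j+2) + gam r (j+2) * psi2 r n (j+2) : ℝ) : ℂ) + ((0:ℝ):ℂ)
          = ((psi1 r (n+1) (j+1) : ℝ) : ℂ)
        rw [stepa hr n j]
        push_cast
        ring
      · show ((0:ℝ):ℂ) + ((-(gam r j * psi1 r n j) + rho r j * psi2 r n j : ℝ) : ℂ)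
          = ((psi2 r (n+1) (j+1) : ℝ) : ℂ)
        rw [stepb hr n j]
        push_cast
        ring

/-- Position distribution `μ_n(j) = ‖Ξ_n(j) φ_0‖²` (squared Euclidean norm on `ℂ²`)
for the initial coin state `φ_0 = (α, β)`. -/
noncomputable def mu (r : ℝ) (α β : ℂ) (n j : ℕ) : ℝ :=
  ‖(Xi r n j).mulVec ![α, β] 0‖ ^ 2
    + ‖(Xi r n j).mulVec ![α, β] 1‖ ^ 2

lemma qcc0 {r : ℝ} (hr : 1 < r) : qq r * cc r 0 = Real.sqrt ((r - 1) / (2 * r)) := by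
  have hr0 : (0:ℝ) < r := by linarith
  have hrm : (0:ℝ) < r - 1 := by linarith
  unfold qq cc
  push_cast
  rw [show (r - 1) / r = Real.sqrt (((r - 1) / r) ^ 2) from (Real.sqrt_sq (by positivity)).symm,
    ← Real.sqrt_mul (by positivity)]
  congr 1
  rw [show r + 0 - 1 = r - 1 by ring, show r + 0 = r by ring]
  field_simp

lemma ccone_val {r : ℝ} (hr : 1 < r) :
    Real.sqrt (2 * r / (r + 1)) * cc r 1 = 1 := by
  have hr0 : (0:ℝ) < r := by linarith
  unfold cc
  push_cast
  rw [show r + 1 - 1 = r by ring, ← Real.sqrt_mul (by positivity)]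
  rw [show 2 * r / (r + 1) * ((r + 1) / (2 * r)) = 1 by field_simp]
  exact Real.sqrt_one

lemma omb_val {r : ℝ} (hr : 1 < r) :
    Real.sqrt (2 * r / (r + 1)) * (qq r * cc r 0) * Real.sqrt (r + 1) = Real.sqrt (r - 1) := by
  have hr0 : (0:ℝ) < r := by linarith
  have hrm : (0:ℝ) < r - 1 := by linarith
  rw [qcc0 hr, ← Real.sqrt_mul (by positivity), ← Real.sqrt_mul (by positivity)]
  congr 1
  field_simp

lemma mu_eq {r : ℝ} (hr : 1 < r) (α β : ℂ)
    (hnorm : ‖α‖ ^ 2 + ‖β‖ ^ 2 = 1)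
    (horth : (Real.sqrt (r - 1) : ℂ) * α + (Real.sqrt (r + 1) : ℂ) * β = 0)
    (n j : ℕ) : mu r α β n j = psi1 r n j ^ 2 + psi2 r n j ^ 2 := by
  have hr0 : (0:ℝ) < r := by linarith
  have hrm : (0:ℝ) < r - 1 := by linarith
  have hrp : (0:ℝ) < r + 1 := by linarith
  have hsp : (0:ℝ) < Real.sqrt (r + 1) := Real.sqrt_pos.mpr hrp
  have hspc : ((Real.sqrt (r + 1) : ℝ) : ℂ) ≠ 0 := by
    simp only [ne_eq, Complex.ofReal_eq_zero]
    exact ne_of_gt hsp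
  set ω : ℂ := (Real.sqrt (2 * r / (r + 1)) : ℂ) * α with hω
  have hβ' : ((Real.sqrt (r + 1) : ℝ) : ℂ) * β = -(((Real.sqrt (r - 1) : ℝ) : ℂ) * α) := by
    linear_combination horth
  have key : ![α, β] = ω • ![((cc r 1 : ℝ) : ℂ), ((-(qq r * cc r 0) : ℝ) : ℂ)] := by
    funext i
    fin_cases i
    · show α = ω * ((cc r 1 : ℝ) : ℂ)
      rw [hω]
      rw [mul_comm ((Real.sqrt (2 * r / (r + 1)) : ℝ) : ℂ) α, mul_assoc]
      rw [show ((Real.sqrt (2 * r / (r + 1)) : ℝ) : ℂ) * ((cc r 1 : ℝ) : ℂ)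
          = (((Real.sqrt (2 * r / (r + 1)) * cc r 1 : ℝ)) : ℂ) by push_cast; ring]
      rw [ccone_val hr]
      simp
    · show β = ω * ((-(qq r * cc r 0) : ℝ) : ℂ)
      have hval := omb_val hr
      have : ((Real.sqrt (r + 1) : ℝ) : ℂ) * (ω * ((-(qq r * cc r 0) : ℝ) : ℂ))
          = ((Real.sqrt (r + 1) : ℝ) : ℂ) * β := by
        rw [hβ', hω]
        push_cast
        rw [show ((Real.sqrt (r+1)) : ℂ) * ((Real.sqrt (2 * r / (r + 1)) : ℂ) * α *
            (-((qq r : ℂ) * (cc r 0 : ℂ))))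
            = -(((Real.sqrt (2 * r / (r + 1)) : ℂ) * ((qq r : ℂ) * (cc r 0 : ℂ)) *
              ((Real.sqrt (r+1)) : ℂ)) * α) by ring]
        rw [show ((Real.sqrt (2 * r / (r + 1)) : ℂ) * ((qq r : ℂ) * (cc r 0 : ℂ)) *
              ((Real.sqrt (r+1)) : ℂ))
            = ((Real.sqrt (2 * r / (r + 1)) * (qq r * cc r 0) * Real.sqrt (r+1) : ℝ) : ℂ) by
          push_cast; ring]
        rw [hval]
      exact (mul_left_cancel₀ hspc this).symm
  -- |ω| = 1
  have habsβ : ‖β‖ = Real.sqrt (r - 1) / Real.sqrt (r + 1) * ‖α‖ := by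
    have h1 : ‖((Real.sqrt (r + 1) : ℝ) : ℂ) * β‖
        = ‖((Real.sqrt (r - 1) : ℝ) : ℂ) * α‖ := by rw [hβ']; simp
    rw [norm_mul, norm_mul, Complex.norm_real, Complex.norm_real, Real.norm_eq_abs, Real.norm_eq_abs,
      abs_of_nonneg (Real.sqrt_nonneg _), abs_of_nonneg (Real.sqrt_nonneg _)] at h1
    field_simp
    linarith [h1]
  have habsω : ‖ω‖ ^ 2 = 1 := by
    have h2 : ‖ω‖ = Real.sqrt (2 * r / (r + 1)) * ‖α‖ := by
      rw [hω, norm_mul, Complex.norm_real, Real.norm_eq_abs, abs_of_nonneg (Real.sqrt_nonneg _)]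
    have h3 : Real.sqrt (2 * r / (r + 1)) ^ 2 = 2 * r / (r + 1) :=
      Real.sq_sqrt (by positivity)
    have h4 : (Real.sqrt (r - 1) / Real.sqrt (r + 1)) ^ 2 = (r - 1) / (r + 1) := by
      rw [div_pow, Real.sq_sqrt hrm.le, Real.sq_sqrt hrp.le]
    rw [habsβ, mul_pow, h4] at hnorm
    rw [h2, mul_pow, h3]
    have h5 : ‖α‖ ^ 2 * (1 + (r - 1) / (r + 1)) = 1 := by linarith
    have h6 : (1 : ℝ) + (r - 1) / (r + 1) = 2 * r / (r + 1) := by field_simp; ring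
    rw [h6] at h5
    linarith
  unfold mu
  rw [key, Matrix.mulVec_smul, main_formula hr n j]
  simp only [Pi.smul_apply, Matrix.cons_val_zero, Matrix.cons_val_one, Matrix.head_cons,
    smul_eq_mul, norm_mul, Complex.norm_real, Real.norm_eq_abs]
  rw [mul_pow, mul_pow, habsω, sq_abs, sq_abs]
  ring

lemma Lv_sq {r : ℝ} (hr : 1 < r) (j : ℕ) :
    Lv r j ^ 2 = 1 / (2 * (r + j) * (r + j + 1)) := by
  have h1 := hj1 hr j
  have hpos : (0:ℝ) < 2 * (r + j) * (r + j + 1) := by nlinarith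
  unfold Lv
  rw [neg_pow, Real.sq_sqrt (one_div_pos.mpr hpos).le]
  ring

lemma cc_sq {r : ℝ} (hr : 1 < r) (j : ℕ) :
    cc r j ^ 2 = (r + j) / (2 * (r + j - 1)) := by
  have h1 := hj1 hr j
  have h0 := hj0 hr j
  unfold cc
  rw [Real.sq_sqrt (div_pos h1 (by linarith)).le]

lemma mq_le {r : ℝ} (hr : 1 < r) (j : ℕ) :
    Lv r j ^ 2 + Rv r j ^ 2 ≤ 1 + r / (2 * (r - 1)) := by
  have h1 := hj1 hr j
  have h0 := hj0 hr j
  have hjn : (0:ℝ) ≤ j := Nat.cast_nonneg j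
  have hL : Lv r j ^ 2 ≤ 1 := by
    rw [Lv_sq hr j]
    rw [div_le_one (by nlinarith)]
    nlinarith
  have hcc : cc r j ^ 2 ≤ r / (2 * (r - 1)) := by
    rw [cc_sq hr j, div_le_div_iff₀ (by nlinarith) (by nlinarith)]
    nlinarith
  have hkap : ((2 * r - 1) / r ^ 2 - 1 / (r + j)) ^ 2 ≤ 1 := by
    have hk1 : (2 * r - 1) / r ^ 2 ≤ 1 := by
      rw [div_le_one (by nlinarith)]; nlinarith
    have hk2 : (0:ℝ) < (2 * r - 1) / r ^ 2 := by
      apply div_pos (by linarith) (by nlinarith)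
    have hk3 : (0:ℝ) < 1 / (r + j) := one_div_pos.mpr h1
    have hk4 : 1 / (r + j) ≤ 1 := by rw [div_le_one h1]; linarith
    nlinarith
  have hRv : Rv r j ^ 2 ≤ r / (2 * (r - 1)) := by
    unfold Rv
    rw [mul_pow]
    calc ((2 * r - 1) / r ^ 2 - 1 / (r + j)) ^ 2 * cc r j ^ 2
        ≤ 1 * (r / (2 * (r - 1))) := by
          apply mul_le_mul hkap hcc (by positivity) (by norm_num)
      _ = r / (2 * (r - 1)) := by ring
  linarith

lemma geom_bound {x : ℝ} (h0 : 0 ≤ x) (h1 : x < 1) (K : ℕ) :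
    ∑ i ∈ Finset.range K, x ^ i ≤ 1 / (1 - x) := by
  rw [geom_sum_eq (ne_of_lt h1)]
  have hp : 0 ≤ x ^ K := pow_nonneg h0 K
  have h2 : (x ^ K - 1) / (x - 1) = (1 - x ^ K) / (1 - x) := by
    rw [← neg_div_neg_eq]; ring_nf
  rw [h2]
  apply div_le_div₀ (by norm_num) (by linarith) (by linarith) le_rfl

lemma mu_interior {r : ℝ} (hr : 1 < r) (α β : ℂ)
    (hnorm : ‖α‖ ^ 2 + ‖β‖ ^ 2 = 1)
    (horth : (Real.sqrt (r - 1) : ℂ) * α + (Real.sqrt (r + 1) : ℂ) * β = 0)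
    {n j : ℕ} (h : j + 2 ≤ n) :
    mu r α β n j = (qq r ^ 2) ^ (n - j - 2) * (Lv r j ^ 2 + Rv r j ^ 2) := by
  rw [mu_eq hr α β hnorm horth, psi1_v r h, psi2_v r h, mul_pow, mul_pow,
    show ((-qq r) ^ (n - j - 2)) ^ 2 = ((-qq r) ^ 2) ^ (n - j - 2) from by
      rw [← pow_mul, ← pow_mul, Nat.mul_comm],
    show (-qq r) ^ 2 = qq r ^ 2 from by ring]
  ring

lemma log_succ_div_tendsto : Filter.Tendsto (fun n : ℕ => Real.log ((n:ℝ) + 1) / n)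
    Filter.atTop (nhds 0) := by
  have h1 : Filter.Tendsto (fun x : ℝ => Real.log x / x) Filter.atTop (nhds 0) :=
    Real.isLittleO_log_id_atTop.tendsto_div_nhds_zero
  have h2 : Filter.Tendsto (fun n : ℕ => (n:ℝ) + 1) Filter.atTop Filter.atTop :=
    Filter.tendsto_atTop_add_const_right _ 1 tendsto_natCast_atTop_atTop
  have h3 : Filter.Tendsto (fun n : ℕ => Real.log ((n:ℝ) + 1) / ((n:ℝ) + 1))
      Filter.atTop (nhds 0) := h1.comp h2
  have h4 : Filter.Tendsto (fun n : ℕ => ((n:ℝ) + 1) / n) Filter.atTop (nhds 1) := by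
    have h5 : Filter.Tendsto (fun n : ℕ => 1 + 1 / (n:ℝ)) Filter.atTop (nhds 1) := by
      simpa using (tendsto_const_nhds (x := (1:ℝ))).add tendsto_one_div_atTop_nhds_zero_nat
    apply h5.congr'
    filter_upwards [Filter.eventually_ge_atTop 1] with n hn
    have hn' : (n:ℝ) ≠ 0 := by
      have : (0:ℝ) < n := by exact_mod_cast Nat.pos_of_ne_zero (by omega)
      exact ne_of_gt this
    field_simp
  have h6 := h3.mul h4
  rw [zero_mul] at h6
  apply h6.congr'
  filter_upwards [Filter.eventually_ge_atTop 1] with n hn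
  have hn' : (n:ℝ) ≠ 0 := by
    have : (0:ℝ) < n := by exact_mod_cast Nat.pos_of_ne_zero (by omega)
    exact ne_of_gt this
  have hn1 : (n:ℝ) + 1 ≠ 0 := by positivity
  field_simp

set_option maxHeartbeats 2000000 in
/-- Large deviation type convergence: for the initial state orthogonal to
`l = (√(r−1), √(r+1))`, `(1/n)·log P(1 − X_n/n > ε) → ε·log(((1−r)/r)²) = 2ε·log((r−1)/r)`. -/
theorem large_deviation (r : ℝ) (hr : 1 < r) (α β : ℂ)
    (hnorm : ‖α‖ ^ 2 + ‖β‖ ^ 2 = 1)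
    (horth : (Real.sqrt (r - 1) : ℂ) * α + (Real.sqrt (r + 1) : ℂ) * β = 0)
    (ε : ℝ) (hε : 0 < ε) (hε1 : ε < 1) :
    Tendsto (fun n : ℕ => (1 : ℝ) / n *
        Real.log (∑ j ∈ Finset.range n,
          if (j : ℝ) < n * (1 - ε) then mu r α β n j else 0))
      atTop (nhds (2 * ε * Real.log ((r - 1) / r))) := by
  have hr0 : (0:ℝ) < r := by linarith
  have hq0 : 0 < qq r := div_pos (by linarith) hr0
  have hq1 : qq r < 1 := by unfold qq; rw [div_lt_one hr0]; linarith
  have hqs0 : 0 < qq r ^ 2 := by positivity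
  have hqs1 : qq r ^ 2 < 1 := by nlinarith
  set Chi : ℝ := 1 + r / (2 * (r - 1)) with hChi
  have hChi0 : 0 < Chi := by
    have : 0 < r / (2 * (r-1)) := div_pos hr0 (by linarith)
    rw [hChi]; linarith
  set D : ℝ := Chi * (1 / (1 - qq r ^ 2)) with hD
  have hD0 : 0 < D := by
    apply mul_pos hChi0 (one_div_pos.mpr (by linarith))
  set K : ℕ → ℕ := fun n => ⌈(n:ℝ) * (1 - ε)⌉₊ with hK
  set e : ℕ → ℕ := fun n => n - 1 - K n with he
  set S : ℕ → ℝ := fun n => ∑ j ∈ Finset.range n,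
      if (j : ℝ) < n * (1 - ε) then mu r α β n j else 0 with hS
  set mq : ℕ → ℝ := fun j => Lv r j ^ 2 + Rv r j ^ 2 with hmq
  have hmqr : ∀ j, mq j = Lv r j ^ 2 + Rv r j ^ 2 := fun j => rfl
  have hmq0 : ∀ j, 0 ≤ mq j := fun j => by rw [hmqr]; positivity
  -- eventual structural facts
  have hP : ∀ᶠ n : ℕ in Filter.atTop, 1 ≤ K n ∧ K n + 1 ≤ n := by
    have hev : ∀ᶠ n : ℕ in Filter.atTop, (2:ℝ) ≤ (n:ℝ) * ε :=
      (tendsto_natCast_atTop_atTop.atTop_mul_const hε).eventually_ge_atTop 2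
    filter_upwards [hev, Filter.eventually_ge_atTop 1] with n h2 h1
    constructor
    · have hn1 : (1:ℝ) ≤ (n:ℝ) := by exact_mod_cast h1
      have : (0:ℝ) < (n:ℝ) * (1 - ε) := by nlinarith
      have hKrfl : K n = ⌈(n:ℝ) * (1 - ε)⌉₊ := rfl
      rw [hKrfl]
      exact Nat.ceil_pos.mpr this
    · have hc : (K n : ℝ) < (n:ℝ) * (1 - ε) + 1 := by
        rw [hK]
        apply Nat.ceil_lt_add_one
        have hn1 : (0:ℝ) ≤ (n:ℝ) := Nat.cast_nonneg n
        nlinarith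
      have : (K n : ℝ) + 1 < (n:ℝ) := by nlinarith
      have h3 : K n + 1 < n := by exact_mod_cast this
      omega
  have hSrep : ∀ᶠ n : ℕ in Filter.atTop,
      S n = ∑ j ∈ Finset.range (K n), (qq r ^ 2) ^ (n - j - 2) * mq j := by
    filter_upwards [hP] with n ⟨hK1, hK2⟩
    have hKrfl : K n = ⌈(n:ℝ) * (1 - ε)⌉₊ := rfl
    have hfil : (Finset.range n).filter (fun j : ℕ => (j : ℝ) < (n:ℝ) * (1 - ε)) = Finset.range (K n) := by
      ext a
      simp only [Finset.mem_filter, Finset.mem_range]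
      constructor
      · rintro ⟨_, h⟩
        rw [hKrfl]
        exact Nat.lt_ceil.mpr h
      · intro h
        rw [hKrfl] at h
        exact ⟨by omega, Nat.lt_ceil.mp h⟩
    rw [hS]
    simp only
    rw [← Finset.sum_filter, hfil]
    apply Finset.sum_congr rfl
    intro j hj
    rw [Finset.mem_range] at hj
    rw [mu_interior hr α β hnorm horth (by omega : j + 2 ≤ n), hmqr]
  -- lower bound
  have hlowpos : ∀ n : ℕ, (0:ℝ) < (qq r ^ 2) ^ (e n) * (1 / (2 * (r + n) * (r + n + 1))) := by
    intro n
    have hn : (0:ℝ) ≤ (n:ℝ) := Nat.cast_nonneg n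
    have : (0:ℝ) < 2 * (r + n) * (r + n + 1) := by nlinarith
    exact mul_pos (pow_pos hqs0 _) (one_div_pos.mpr this)
  have hlow : ∀ᶠ n : ℕ in Filter.atTop,
      (qq r ^ 2) ^ (e n) * (1 / (2 * (r + n) * (r + n + 1))) ≤ S n := by
    filter_upwards [hSrep, hP] with n hrep ⟨hK1, hK2⟩
    rw [hrep]
    have hmem : K n - 1 ∈ Finset.range (K n) := Finset.mem_range.mpr (by omega)
    have hsingle : (qq r ^ 2) ^ (n - (K n - 1) - 2) * mq (K n - 1)
        ≤ ∑ j ∈ Finset.range (K n), (qq r ^ 2) ^ (n - j - 2) * mq j :=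
      Finset.single_le_sum (f := fun j => (qq r ^ 2) ^ (n - j - 2) * mq j)
        (fun j _ => mul_nonneg (by positivity) (hmq0 j)) hmem
    have herfl : e n = n - 1 - K n := rfl
    have hexp : n - (K n - 1) - 2 = e n := by omega
    rw [hexp] at hsingle
    refine le_trans ?_ hsingle
    apply mul_le_mul_of_nonneg_left ?_ (by positivity)
    have hcast : ((K n - 1 : ℕ) : ℝ) ≤ (n : ℝ) := by
      have : K n - 1 ≤ n := by omega
      exact_mod_cast this
    have h1 := hj1 hr (K n - 1)
    have hn : (0:ℝ) ≤ (n:ℝ) := Nat.cast_nonneg n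
    calc (1:ℝ) / (2 * (r + n) * (r + n + 1))
        ≤ 1 / (2 * (r + ((K n - 1 : ℕ):ℝ)) * (r + ((K n - 1 : ℕ):ℝ) + 1)) := by
          apply one_div_le_one_div_of_le (by nlinarith) (by nlinarith)
      _ = Lv r (K n - 1) ^ 2 := (Lv_sq hr (K n - 1)).symm
      _ ≤ mq (K n - 1) := by rw [hmqr]; nlinarith [sq_nonneg (Rv r (K n - 1))]
  have hup : ∀ᶠ n : ℕ in Filter.atTop, S n ≤ (qq r ^ 2) ^ (e n) * D := by
    filter_upwards [hSrep, hP] with n hrep ⟨hK1, hK2⟩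
    rw [hrep]
    calc ∑ j ∈ Finset.range (K n), (qq r ^ 2) ^ (n - j - 2) * mq j
        ≤ ∑ j ∈ Finset.range (K n), (qq r ^ 2) ^ (e n) * ((qq r ^ 2) ^ (K n - 1 - j) * Chi) := by
          apply Finset.sum_le_sum
          intro j hj
          rw [Finset.mem_range] at hj
          have herfl : e n = n - 1 - K n := rfl
          have hexp : n - j - 2 = e n + (K n - 1 - j) := by omega
          rw [hexp, pow_add, mul_assoc]
          apply mul_le_mul_of_nonneg_left ?_ (by positivity)
          apply mul_le_mul_of_nonneg_left (mq_le hr j) (by positivity)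
      _ = (qq r ^ 2) ^ (e n) * ((∑ j ∈ Finset.range (K n), (qq r ^ 2) ^ (K n - 1 - j)) * Chi) := by
          rw [← Finset.mul_sum, ← Finset.sum_mul]
      _ ≤ (qq r ^ 2) ^ (e n) * ((1 / (1 - qq r ^ 2)) * Chi) := by
          apply mul_le_mul_of_nonneg_left ?_ (by positivity)
          apply mul_le_mul_of_nonneg_right ?_ hChi0.le
          rw [show (∑ j ∈ Finset.range (K n), (qq r ^ 2) ^ (K n - 1 - j))
              = ∑ j ∈ Finset.range (K n), (qq r ^ 2) ^ j from
            Finset.sum_range_reflect (fun i => (qq r ^ 2) ^ i) (K n)]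
          exact geom_bound hqs0.le hqs1 (K n)
      _ = (qq r ^ 2) ^ (e n) * D := by rw [hD]; ring
  -- limit of K n / n
  have hKn : Filter.Tendsto (fun n : ℕ => (K n : ℝ) / n) Filter.atTop (nhds (1 - ε)) := by
    have hupK : Filter.Tendsto (fun n : ℕ => (1 - ε) + 1 / (n:ℝ)) Filter.atTop (nhds (1 - ε)) := by
      simpa using (tendsto_const_nhds (x := (1 - ε : ℝ))).add tendsto_one_div_atTop_nhds_zero_nat
    apply tendsto_of_tendsto_of_tendsto_of_le_of_le' tendsto_const_nhds hupK
    · filter_upwards [Filter.eventually_ge_atTop 1] with n hn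
      have hn0 : (0:ℝ) < n := by exact_mod_cast Nat.pos_of_ne_zero (by omega)
      rw [le_div_iff₀ hn0]
      have h := Nat.le_ceil ((n:ℝ) * (1 - ε))
      have hKrfl : (K n : ℝ) = (⌈(n:ℝ) * (1 - ε)⌉₊ : ℝ) := rfl
      rw [hKrfl]
      nlinarith
    · filter_upwards [Filter.eventually_ge_atTop 1] with n hn
      have hn0 : (0:ℝ) < n := by exact_mod_cast Nat.pos_of_ne_zero (by omega)
      rw [div_le_iff₀ hn0]
      have hcl : (K n : ℝ) < (n:ℝ) * (1 - ε) + 1 := by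
        have hKrfl : (K n : ℝ) = (⌈(n:ℝ) * (1 - ε)⌉₊ : ℝ) := rfl
        rw [hKrfl]
        apply Nat.ceil_lt_add_one
        nlinarith
      have h1n : (1 / (n:ℝ)) * n = 1 := by field_simp
      nlinarith [h1n]
  -- limit of e n / n
  have helim : Filter.Tendsto (fun n : ℕ => ((e n : ℕ) : ℝ) / n) Filter.atTop (nhds ε) := by
    have hmain : Filter.Tendsto (fun n : ℕ => 1 - 1 / (n:ℝ) - (K n : ℝ) / n)
        Filter.atTop (nhds (1 - 0 - (1 - ε))) :=
      (tendsto_const_nhds.sub tendsto_one_div_atTop_nhds_zero_nat).sub hKn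
    rw [show (1:ℝ) - 0 - (1 - ε) = ε by ring] at hmain
    apply hmain.congr'
    filter_upwards [hP, Filter.eventually_ge_atTop 1] with n ⟨hK1, hK2⟩ hn
    have hn0 : (0:ℝ) < n := by exact_mod_cast Nat.pos_of_ne_zero (by omega)
    have herfl : e n = n - 1 - K n := rfl
    have hcast : ((e n : ℕ) : ℝ) = (n:ℝ) - 1 - (K n : ℝ) := by
      rw [herfl]
      have h1 : K n ≤ n - 1 := by omega
      have h2 : 1 ≤ n := by omega
      push_cast [Nat.cast_sub h1, Nat.cast_sub h2]
      ring
    rw [hcast]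
    field_simp
  -- limit of log(2(r+n)(r+n+1))/n
  have hlogpoly : Filter.Tendsto (fun n : ℕ => Real.log (2 * (r + n) * (r + n + 1)) / n)
      Filter.atTop (nhds 0) := by
    have hupper : Filter.Tendsto
        (fun n : ℕ => 2 * Real.log (2 * (r + 1)) * (1 / (n:ℝ)) + 2 * (Real.log ((n:ℝ) + 1) / n))
        Filter.atTop (nhds 0) := by
      have h1 := (tendsto_one_div_atTop_nhds_zero_nat).const_mul (2 * Real.log (2 * (r + 1)))
      have h2 := log_succ_div_tendsto.const_mul (2:ℝ)
      simpa using h1.add h2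
    apply tendsto_of_tendsto_of_tendsto_of_le_of_le' tendsto_const_nhds hupper
    · filter_upwards with n
      apply div_nonneg ?_ (Nat.cast_nonneg n)
      apply Real.log_nonneg
      have hn : (0:ℝ) ≤ n := Nat.cast_nonneg n
      nlinarith
    · filter_upwards [Filter.eventually_ge_atTop 1] with n hn1
      have hn0 : (0:ℝ) < n := by exact_mod_cast Nat.pos_of_ne_zero (by omega)
      have hn : (0:ℝ) ≤ n := Nat.cast_nonneg n
      have harg : (0:ℝ) < 2 * (r + n) * (r + n + 1) := by nlinarith
      have hb : (0:ℝ) < 2 * (r + 1) * ((n:ℝ) + 1) := by nlinarith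
      have hrn : (0:ℝ) ≤ r * n := mul_nonneg (by linarith) hn
      have k1 : r + (n:ℝ) ≤ (r + 1) * ((n:ℝ) + 1) := by nlinarith
      have k2 : r + (n:ℝ) + 1 ≤ (r + 1) * ((n:ℝ) + 1) := by nlinarith
      have k4 : (0:ℝ) ≤ (r + 1) * ((n:ℝ) + 1) := by nlinarith
      have k5 : (r + (n:ℝ)) * (r + (n:ℝ) + 1) ≤ ((r + 1) * ((n:ℝ) + 1)) * ((r + 1) * ((n:ℝ) + 1)) :=
        mul_le_mul k1 k2 (by linarith) k4
      have hle : 2 * (r + n) * (r + n + 1) ≤ (2 * (r + 1) * ((n:ℝ) + 1)) ^ 2 := by nlinarith [k5]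
      have hlog : Real.log (2 * (r + n) * (r + n + 1))
          ≤ 2 * Real.log (2 * (r + 1)) + 2 * Real.log ((n:ℝ) + 1) := by
        calc Real.log (2 * (r + n) * (r + n + 1))
            ≤ Real.log ((2 * (r + 1) * ((n:ℝ) + 1)) ^ 2) := Real.log_le_log harg hle
          _ = 2 * Real.log (2 * (r + 1) * ((n:ℝ) + 1)) := by
              rw [Real.log_pow]; push_cast; ring
          _ = 2 * Real.log (2 * (r + 1)) + 2 * Real.log ((n:ℝ) + 1) := by
              rw [Real.log_mul (by positivity) (by positivity)]; ring
      calc Real.log (2 * (r + n) * (r + n + 1)) / n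
          ≤ (2 * Real.log (2 * (r + 1)) + 2 * Real.log ((n:ℝ) + 1)) / n := by gcongr
        _ = 2 * Real.log (2 * (r + 1)) * (1 / (n:ℝ)) + 2 * (Real.log ((n:ℝ) + 1) / n) := by
            ring
  -- final squeeze
  have hgoalval : ε * Real.log (qq r ^ 2) = 2 * ε * Real.log ((r - 1) / r) := by
    rw [Real.log_pow]
    unfold qq
    push_cast
    ring
  have hLb : Filter.Tendsto (fun n : ℕ =>
      ((e n : ℕ) : ℝ) / n * Real.log (qq r ^ 2) - Real.log (2 * (r + n) * (r + n + 1)) / n)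
      Filter.atTop (nhds (2 * ε * Real.log ((r - 1) / r))) := by
    have := (helim.mul_const (Real.log (qq r ^ 2))).sub hlogpoly
    rw [sub_zero, hgoalval] at this
    exact this
  have hUb : Filter.Tendsto (fun n : ℕ =>
      ((e n : ℕ) : ℝ) / n * Real.log (qq r ^ 2) + Real.log D * (1 / n))
      Filter.atTop (nhds (2 * ε * Real.log ((r - 1) / r))) := by
    have h2 := tendsto_one_div_atTop_nhds_zero_nat.const_mul (Real.log D)
    have := (helim.mul_const (Real.log (qq r ^ 2))).add h2
    rw [mul_zero, add_zero, hgoalval] at this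
    exact this
  apply tendsto_of_tendsto_of_tendsto_of_le_of_le' hLb hUb
  · filter_upwards [hlow, Filter.eventually_ge_atTop 1] with n hl hn1
    have hn0 : (0:ℝ) < n := by exact_mod_cast Nat.pos_of_ne_zero (by omega)
    have hn : (0:ℝ) ≤ n := Nat.cast_nonneg n
    have hdpos : (0:ℝ) < 1 / (2 * (r + n) * (r + n + 1)) :=
      one_div_pos.mpr (by nlinarith)
    have hSpos : 0 < S n := lt_of_lt_of_le (hlowpos n) hl
    have hlog : ((e n : ℕ) : ℝ) * Real.log (qq r ^ 2) - Real.log (2 * (r + n) * (r + n + 1))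
        ≤ Real.log (S n) := by
      have h1 := Real.log_le_log (hlowpos n) hl
      rw [Real.log_mul (pow_ne_zero _ (ne_of_gt hqs0)) (ne_of_gt hdpos), Real.log_pow,
        one_div, Real.log_inv] at h1
      linarith
    rw [show ((e n : ℕ) : ℝ) / n * Real.log (qq r ^ 2) - Real.log (2 * (r + n) * (r + n + 1)) / n
        = 1 / n * (((e n : ℕ) : ℝ) * Real.log (qq r ^ 2) - Real.log (2 * (r + n) * (r + n + 1)))
        from by ring]
    apply mul_le_mul_of_nonneg_left hlog (by positivity)
  · filter_upwards [hlow, hup, Filter.eventually_ge_atTop 1] with n hl hu hn1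
    have hn0 : (0:ℝ) < n := by exact_mod_cast Nat.pos_of_ne_zero (by omega)
    have hSpos : 0 < S n := lt_of_lt_of_le (hlowpos n) hl
    have hlog : Real.log (S n)
        ≤ ((e n : ℕ) : ℝ) * Real.log (qq r ^ 2) + Real.log D := by
      have h1 := Real.log_le_log hSpos hu
      rw [Real.log_mul (pow_ne_zero _ (ne_of_gt hqs0)) (ne_of_gt hD0), Real.log_pow] at h1
      linarith
    rw [show ((e n : ℕ) : ℝ) / n * Real.log (qq r ^ 2) + Real.log D * (1 / n)
        = 1 / n * (((e n : ℕ) : ℝ) * Real.log (qq r ^ 2) + Real.log D)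
        from by ring]
    apply mul_le_mul_of_nonneg_left hlog (by positivity)
end

section
/- The weight of the rightmost path: for every n ≥ 1, Ξ_n(n) = √((r/(r+1))·(r+n)/(r+n−1)) · Q_0, where Q_0 = [[0, 0], [−1/r, √(1−1/r²)]]; consequently lim_{n→∞} Ξ_n(n) = √(r/(r+1)) · [[0, 0], [−1/r, √(1−1/r²)]] (entrywise limit of 2×2 matrices). -/
open Filter Topology Matrix

lemma Xi_eq_zero (r : ℝ) : ∀ n j : ℕ, n < j → Xi r n j = 0 := by
  intro n
  induction n with
  | zero => intro j hj; match j, hj with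
            | j+1, _ => rfl
  | succ n ih =>
    intro j hj
    match j, hj with
    | j+1, hj =>
      have h1 : Xi r n (j+2) = 0 := ih _ (by omega)
      have h2 : Xi r n j = 0 := ih _ (by omega)
      show Pmat r (j + 2) * Xi r n (j + 2) + Qmat r j * Xi r n j = 0
      rw [h1, h2, mul_zero, mul_zero, add_zero]

lemma Xi_diag_succ (r : ℝ) (n : ℕ) :
    Xi r (n+1) (n+1) = Qmat r n * Xi r n n := by
  show Pmat r (n + 2) * Xi r n (n + 2) + Qmat r n * Xi r n n = _
  rw [Xi_eq_zero r n (n+2) (by omega), mul_zero, zero_add]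

lemma Qmul_s7 (r : ℝ) (n : ℕ) (c : ℝ) (M : Matrix (Fin 2) (Fin 2) ℂ)
    (hM : M = !![0, 0; (-(1 / r) : ℂ), (Real.sqrt (1 - 1 / r ^ 2) : ℂ)]) :
    Qmat r n * ((c : ℂ) • M) = ((rho r n * c : ℝ) : ℂ) • M := by
  subst hM
  ext i k
  fin_cases i <;> fin_cases k <;>
    simp [Qmat, Matrix.mul_apply, Fin.sum_univ_two] <;> ring


/-- The weight of the rightmost path:
`Ξ_n(n) = √((r/(r+1))·(r+n)/(r+n−1)) · Q_0` for `n ≥ 1`, and consequently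
`Ξ_n(n) → √(r/(r+1)) · [[0,0],[−1/r, √(1−1/r²)]]` entrywise. -/
theorem rightmost_path_weight (r : ℝ) (hr : 1 < r) :
    (∀ n : ℕ, 1 ≤ n →
      Xi r n n = (Real.sqrt (r / (r + 1) * ((r + n) / (r + n - 1))) : ℂ) •
        !![0, 0; (-(1 / r) : ℂ), (Real.sqrt (1 - 1 / r ^ 2) : ℂ)]) ∧
    ∀ i k : Fin 2,
      Tendsto (fun n : ℕ => Xi r n n i k) atTop
        (nhds (((Real.sqrt (r / (r + 1)) : ℂ) •
          !![0, 0; (-(1 / r) : ℂ), (Real.sqrt (1 - 1 / r ^ 2) : ℂ)]) i k)) := by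
  have hr0 : (0:ℝ) < r := by linarith
  set M : Matrix (Fin 2) (Fin 2) ℂ :=
    !![0, 0; (-(1 / r) : ℂ), (Real.sqrt (1 - 1 / r ^ 2) : ℂ)] with hM
  set c : ℕ → ℝ := fun n => Real.sqrt (r / (r + 1) * ((r + n) / (r + n - 1))) with hc
  have key : ∀ n : ℕ, 1 ≤ n → Xi r n n = ((c n : ℝ) : ℂ) • M := by
    intro n hn
    induction n with
    | zero => omega
    | succ n ih =>
      rcases Nat.eq_zero_or_pos n with h0 | hpos
      · subst h0
        have h1 : Xi r 1 1 = Qmat r 0 * (1 : Matrix (Fin 2) (Fin 2) ℂ) := by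
          rw [Xi_diag_succ]; rfl
        have hc1 : c 1 = 1 := by
          have : r / (r + 1) * ((r + (1:ℕ)) / (r + (1:ℕ) - 1)) = 1 := by
            push_cast; field_simp
            rw [add_sub_cancel_right, div_self (ne_of_gt hr0)]
          rw [hc]; simp only [this, Real.sqrt_one]
        rw [h1, hc1, mul_one]
        rw [hM, Qmat]
        ext i k
        fin_cases i <;> fin_cases k <;> simp [gam, rho]
      · have hrn : (0:ℝ) < r + n - 1 := by
          have : (1:ℝ) ≤ (n:ℝ) := by exact_mod_cast hpos
          linarith
        have hrn2 : (0:ℝ) < r + n := by linarith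
        rw [Xi_diag_succ, ih hpos, Qmul_s7 r n (c n) M hM]
        congr 2
        have hprod : rho r n * c n = c (n+1) := by
          rw [hc, rho, gam]
          rw [← Real.sqrt_mul (by
            rw [div_pow, one_pow]
            rw [sub_nonneg, div_le_one (by positivity)]
            nlinarith)]
          congr 1
          have h1 : (r + (n:ℝ)) ≠ 0 := ne_of_gt hrn2
          have h2 : (r + 1) ≠ 0 := by positivity
          have h3 : (r + (n:ℝ) - 1) ≠ 0 := ne_of_gt hrn
          have h4 : r + r * (n:ℝ) + r ^ 2 + (n:ℝ) ≠ 0 := by positivity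
          push_cast
          have e1 : 1 - (1/(r+(n:ℝ)))^2 = ((r+(n:ℝ))^2 - 1)/(r+(n:ℝ))^2 := by
            field_simp
          have e2 : r + ((n:ℝ)+1) - 1 = r + (n:ℝ) := by ring
          rw [e1, e2, div_mul_div_comm, div_mul_div_comm, div_mul_div_comm,
            div_eq_div_iff (mul_ne_zero (pow_ne_zero _ h1) (mul_ne_zero h2 h3))
              (mul_ne_zero h2 h1)]
          ring
        exact_mod_cast hprod
  constructor
  · exact key
  · intro i k
    have hlim : Tendsto (fun n : ℕ => c n) atTop (nhds (Real.sqrt (r / (r + 1)))) := by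
      have h1 : Tendsto (fun n : ℕ => r / (r + 1) * ((r + n) / (r + n - 1))) atTop
          (nhds (r / (r + 1))) := by
        have h2 : Tendsto (fun n : ℕ => (r + (n:ℝ)) / (r + n - 1)) atTop (nhds 1) := by
          have hA : Tendsto (fun n : ℕ => (r + (n:ℝ) - 1)) atTop atTop :=
            tendsto_atTop_add_const_right _ _
              (tendsto_atTop_add_const_left _ _ tendsto_natCast_atTop_atTop)
          have hinv : Tendsto (fun n : ℕ => (r + (n:ℝ) - 1)⁻¹) atTop (nhds 0) := by
            have := hA.inv_tendsto_atTop
            simpa [Pi.inv_def] using this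
          have hsum : Tendsto (fun n : ℕ => 1 + (r + (n:ℝ) - 1)⁻¹) atTop (nhds 1) := by
            simpa using (tendsto_const_nhds (x := (1:ℝ))).add hinv
          refine hsum.congr' ?_
          filter_upwards [eventually_ge_atTop 1] with n hn
          have hpos : (0:ℝ) < r + n - 1 := by
            have : (1:ℝ) ≤ (n:ℝ) := by exact_mod_cast hn
            linarith
          field_simp
          ring
        simpa using (tendsto_const_nhds (x := r / (r+1))).mul h2
      exact (Real.continuous_sqrt.tendsto _).comp h1
    have hlimC : Tendsto (fun n : ℕ => ((c n : ℝ) : ℂ)) atTop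
        (nhds ((Real.sqrt (r / (r + 1)) : ℂ))) :=
      (Complex.continuous_ofReal.tendsto _).comp hlim
    have : Tendsto (fun n : ℕ => ((c n : ℝ) : ℂ) * M i k) atTop
        (nhds ((Real.sqrt (r / (r + 1)) : ℂ) * M i k)) := hlimC.mul tendsto_const_nhds
    simp only [Matrix.smul_apply, smul_eq_mul]
    refine this.congr' ?_
    filter_upwards [eventually_ge_atTop 1] with n hn
    rw [key n hn]
    simp [Matrix.smul_apply, smul_eq_mul]
end

section
/- Absolutely continuous part of the spectral measure: let r > 1 and F(z) = ((z+1)·((r−1)z − r)) / ((z−1)·((r−1)z + r)). Then for every θ ∈ (0, 2π), lim_{s→1⁻} Re F(s·e^{iθ}) = cos²(θ/2) / (cos²(θ/2) + 1/(4r(r−1))). -/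
open Filter Topology

/-- Absolutely continuous part of the spectral measure: the radial boundary limit of
`Re F(s·e^{iθ})` as `s → 1⁻` equals `cos²(θ/2)/(cos²(θ/2) + 1/(4r(r−1)))` for
`θ ∈ (0, 2π)`, where `F(z) = ((z+1)((r−1)z − r))/((z−1)((r−1)z + r))`. -/
theorem spectral_measure_ac_part (r : ℝ) (hr : 1 < r)
    (F : ℂ → ℂ) (hF : ∀ z : ℂ,
      F z = (z + 1) * (((r : ℂ) - 1) * z - r) / ((z - 1) * (((r : ℂ) - 1) * z + r))) :
    ∀ θ : ℝ, θ ∈ Set.Ioo 0 (2 * Real.pi) →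
      Tendsto (fun s : ℝ => (F ((s : ℂ) * Complex.exp ((θ : ℂ) * Complex.I))).re)
        (nhdsWithin 1 (Set.Iio 1))
        (nhds (Real.cos (θ / 2) ^ 2 /
          (Real.cos (θ / 2) ^ 2 + 1 / (4 * r * (r - 1))))) := by
  intro θ hθ
  obtain ⟨hθ0, hθ2⟩ := hθ
  have hπ : 0 < Real.pi := Real.pi_pos
  set c : ℝ := Real.cos θ with hcdef
  set s : ℝ := Real.sin θ with hsdef
  set C : ℝ := Real.cos (θ / 2) with hCdef
  set z : ℂ := Complex.exp ((θ : ℂ) * Complex.I) with hzdef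
  have hz : z = (c : ℂ) + (s : ℂ) * Complex.I := by
    rw [hzdef, Complex.exp_mul_I, ← Complex.ofReal_cos, ← Complex.ofReal_sin]
  -- cos θ < 1
  have hc1 : c < 1 := by
    rcases lt_or_eq_of_le (Real.cos_le_one θ) with h | h
    · exact h
    · exfalso
      have := (Real.cos_eq_one_iff_of_lt_of_lt (by linarith) hθ2).1 h
      linarith
  have hcge : -1 ≤ c := Real.neg_one_le_cos θ
  have hs2 : s ^ 2 = 1 - c ^ 2 := by
    rw [hsdef, hcdef, Real.sin_sq]
  have hcC : c = 2 * C ^ 2 - 1 := by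
    have := Real.cos_sq (θ / 2)
    rw [← hCdef] at this
    have h2 : 2 * (θ / 2) = θ := by ring
    rw [h2] at this
    rw [hcdef]; linarith
  have hr0 : (0 : ℝ) < r := by linarith
  have hr1 : (0 : ℝ) < r - 1 := by linarith
  -- denominator factors nonzero at z
  have hz1 : z - 1 ≠ 0 := by
    intro h
    have hz1' : z = 1 := by linear_combination h
    have : c = 1 := by
      have := congrArg Complex.re hz1'
      simpa [hz] using this
    linarith
  have hz2 : ((r : ℂ) - 1) * z + r ≠ 0 := by
    intro h
    have habs : ‖((r : ℂ) - 1) * z‖ = ‖-(r : ℂ)‖ := by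
      rw [eq_neg_of_add_eq_zero_left h]
    have hzabs : ‖z‖ = 1 := by
      rw [hzdef]; exact Complex.norm_exp_ofReal_mul_I θ
    have hcast : ((r : ℂ) - 1) = ((r - 1 : ℝ) : ℂ) := by push_cast; ring
    rw [norm_mul, hzabs, mul_one, norm_neg, hcast, Complex.norm_real, Real.norm_eq_abs,
      Complex.norm_real, Real.norm_eq_abs, abs_of_pos hr1, abs_of_pos hr0] at habs
    linarith
  have hD : (z - 1) * (((r : ℂ) - 1) * z + r) ≠ 0 := mul_ne_zero hz1 hz2
  -- the value at z
  have hval : ((z + 1) * (((r : ℂ) - 1) * z - r) / ((z - 1) * (((r : ℂ) - 1) * z + r))).re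
      = C ^ 2 / (C ^ 2 + 1 / (4 * r * (r - 1))) := by
    set N : ℂ := (z + 1) * (((r : ℂ) - 1) * z - r) with hN
    set D : ℂ := (z - 1) * (((r : ℂ) - 1) * z + r) with hDdef
    have hconjD : (starRingEnd ℂ) D ≠ 0 := by
      simpa using hD
    have hcs : (c : ℂ) ^ 2 + (s : ℂ) ^ 2 = 1 := by
      have := Real.sin_sq_add_cos_sq θ
      rw [← hsdef, ← hcdef] at this
      norm_cast
      linarith
    have e1 : (z + 1) * (starRingEnd ℂ) (z - 1) = -(2 * (s : ℂ)) * Complex.I := by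
      rw [hz]
      simp only [map_sub, map_add, map_mul, Complex.conj_ofReal, Complex.conj_I, map_one]
      linear_combination hcs - (s : ℂ) ^ 2 * Complex.I_sq
    have e2 : (((r : ℂ) - 1) * z - r) * (starRingEnd ℂ) (((r : ℂ) - 1) * z + r)
        = ((1 : ℂ) - 2 * r) + 2 * r * (r - 1) * (s : ℂ) * Complex.I := by
      rw [hz]
      simp only [map_sub, map_add, map_mul, Complex.conj_ofReal, Complex.conj_I, map_one]
      linear_combination ((r : ℂ) - 1) ^ 2 * hcs - ((r : ℂ) - 1) ^ 2 * (s : ℂ) ^ 2 * Complex.I_sq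
    have ekey : N * (starRingEnd ℂ) D
        = ((4 * r * (r - 1) * s ^ 2 : ℝ) : ℂ) + ((2 * s * (2 * r - 1) : ℝ) : ℂ) * Complex.I := by
      rw [hN, hDdef, map_mul]
      calc (z + 1) * (((r : ℂ) - 1) * z - r) *
            ((starRingEnd ℂ) (z - 1) * (starRingEnd ℂ) (((r : ℂ) - 1) * z + r))
          = ((z + 1) * (starRingEnd ℂ) (z - 1)) *
            ((((r : ℂ) - 1) * z - r) * (starRingEnd ℂ) (((r : ℂ) - 1) * z + r)) := by ring
        _ = (-(2 * (s : ℂ)) * Complex.I) *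
            (((1 : ℂ) - 2 * r) + 2 * r * (r - 1) * (s : ℂ) * Complex.I) := by rw [e1, e2]
        _ = _ := by push_cast; ring_nf; rw [Complex.I_sq]; ring
    have hNdiv : N / D = N * (starRingEnd ℂ) D / ((Complex.normSq D : ℝ) : ℂ) := by
      rw [← Complex.mul_conj, mul_div_mul_right _ _ hconjD]
    have hnormSq : Complex.normSq D = (2 - 2 * c) * ((r - 1) ^ 2 + r ^ 2 + 2 * r * (r - 1) * c) := by
      rw [hDdef, map_mul]
      have n1 : Complex.normSq (z - 1) = 2 - 2 * c := by
        rw [hz]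
        simp [Complex.normSq_apply]
        nlinarith [hs2]
      have n2 : Complex.normSq (((r : ℂ) - 1) * z + r)
          = (r - 1) ^ 2 + r ^ 2 + 2 * r * (r - 1) * c := by
        rw [hz]
        simp [Complex.normSq_apply]
        nlinarith [hs2]
      rw [n1, n2]
    rw [hNdiv, ekey]
    rw [add_div, Complex.add_re, Complex.div_ofReal_re, Complex.div_ofReal_re]
    simp only [Complex.ofReal_re, Complex.mul_re, Complex.I_re, Complex.I_im,
      Complex.ofReal_im, mul_zero, zero_mul, mul_one, sub_zero, zero_sub]
    rw [hnormSq]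
    have hden1 : 2 - 2 * c > 0 := by linarith
    have hden2 : (r - 1) ^ 2 + r ^ 2 + 2 * r * (r - 1) * c > 0 := by nlinarith
    have hden3 : C ^ 2 + 1 / (4 * r * (r - 1)) > 0 := by positivity
    have h4r : 4 * r * (r - 1) > 0 := by positivity
    have hEq : C ^ 2 / (C ^ 2 + 1 / (4 * r * (r - 1)))
        = 4 * r * (r - 1) * C ^ 2 / (4 * r * (r - 1) * C ^ 2 + 1) := by
      rw [div_eq_div_iff hden3.ne' (by positivity)]
      field_simp
    rw [hEq]
    norm_num
    rw [div_eq_div_iff (by positivity) (by positivity), hs2, hcC]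
    ring
  -- continuity
  have hcont : ContinuousAt (fun s : ℝ =>
      (((s : ℂ) * z + 1) * (((r : ℂ) - 1) * ((s : ℂ) * z) - r) /
        (((s : ℂ) * z - 1) * (((r : ℂ) - 1) * ((s : ℂ) * z) + r))).re) 1 := by
    apply Complex.continuous_re.continuousAt.comp
    apply ContinuousAt.div
    · fun_prop
    · fun_prop
    · simpa using hD
  have := (hcont.continuousWithinAt (s := Set.Iio 1)).tendsto
  simp only [Complex.ofReal_one, one_mul] at this
  rw [hval] at this
  convert this using 2 with x
  rw [hF]
end

section
/- Mass point of the spectral measure at z = 1: let r > 1 and F(z) = ((z+1)·((r−1)z − r)) / ((z−1)·((r−1)z + r)). Then lim_{s→1⁻} ((1−s)/2)·F(s) = 1/(2r−1), where s ranges over real numbers in (0,1). -/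
open Filter Topology

/-- Mass point of the spectral measure at `z = 1`:
`lim_{s→1⁻} ((1−s)/2)·F(s) = 1/(2r−1)` for real `s ∈ (0,1)`, where
`F(z) = ((z+1)((r−1)z − r))/((z−1)((r−1)z + r))`. -/
theorem spectral_measure_mass_point (r : ℝ) (hr : 1 < r)
    (F : ℂ → ℂ) (hF : ∀ z : ℂ,
      F z = (z + 1) * (((r : ℂ) - 1) * z - r) / ((z - 1) * (((r : ℂ) - 1) * z + r))) :
    Tendsto (fun s : ℝ => (((1 - s) / 2 : ℝ) : ℂ) * F (s : ℂ))
      (nhdsWithin 1 (Set.Ioo 0 1)) (nhds ((1 / (2 * (r : ℂ) - 1)))) := by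
  have hr0 : (2 * (r : ℂ) - 1) ≠ 0 := by
    intro h
    have := congrArg Complex.re h
    simp at this
    linarith
  set g : ℝ → ℂ := fun s =>
    -(((s : ℂ) + 1) * (((r : ℂ) - 1) * s - r)) / (2 * (((r : ℂ) - 1) * s + r)) with hg
  have hden : ∀ s : ℝ, s ∈ Set.Ioo (0:ℝ) 1 → (((r:ℂ) - 1) * s + r) ≠ 0 := by
    intro s hs h
    have := congrArg Complex.re h
    simp at this
    nlinarith [hs.1, hs.2]
  have heq : ∀ᶠ s : ℝ in nhdsWithin 1 (Set.Ioo 0 1),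
      (((1 - s) / 2 : ℝ) : ℂ) * F (s : ℂ) = g s := by
    filter_upwards [self_mem_nhdsWithin] with s hs
    have hs1 : ((s : ℂ) - 1) ≠ 0 := by
      intro h
      have := congrArg Complex.re h
      simp at this
      linarith [hs.2, this]
    have hE := hden s hs
    rw [hF]
    simp only [hg]
    rw [mul_div_assoc']
    rw [div_eq_div_iff (mul_ne_zero hs1 hE) (mul_ne_zero two_ne_zero hE)]
    push_cast
    ring
  rw [tendsto_congr' heq]
  have hE1 : ((2 : ℂ) * (((r:ℂ) - 1) * ((1:ℝ):ℂ) + r)) ≠ 0 := by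
    intro h
    apply hr0
    push_cast at h ⊢
    linear_combination h / 2
  have hcont : ContinuousAt g 1 := by
    apply ContinuousAt.div
    · fun_prop
    · fun_prop
    · exact hE1
  have hval : g 1 = 1 / (2 * (r:ℂ) - 1) := by
    simp only [hg]
    rw [div_eq_div_iff hE1 hr0]
    push_cast
    ring
  rw [← hval]
  exact hcont.tendsto.mono_left nhdsWithin_le_nhds
end
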